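/- arXiv:2012.13858 — 3 statements merged into one kernel-verified Lean document; each statement's English description precedes it below -/
import Mathlib

section
/- If A is a distributive meet-semilattice, then its semilattice of filters (ordered by inclusion, meet = intersection) is distributive: if p ∩ q ⊆ r for filters p, q, r, then there exist filters p' ⊇ p and q' ⊇ q with p' ∩ q' = r. -/
def IsSLFilter {α : Type*} [SemilatticeInf α] [OrderTop α] (p : Set α) : Prop :=
  p.Nonempty ∧ (∀ x ∈ p, ∀ y, x ≤ y → y ∈ p) ∧ ∀ x ∈ p, ∀ y ∈ p, x ⊓ y ∈ p

def IsDistribSL (α : Type*) [SemilatticeInf α] [OrderTop α] : Prop :=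
  ∀ a b c : α, a ⊓ b ≤ c → ∃ a' b' : α, a ≤ a' ∧ b ≤ b' ∧ c = a' ⊓ b'

theorem filterSemilattice_distributive {α : Type*} [SemilatticeInf α] [OrderTop α]
    (hdist : IsDistribSL α) (p q r : Set α)
    (hp : IsSLFilter p) (hq : IsSLFilter q) (hr : IsSLFilter r)
    (hsub : p ∩ q ⊆ r) :
    ∃ p' q' : Set α, IsSLFilter p' ∧ IsSLFilter q' ∧
      p ⊆ p' ∧ q ⊆ q' ∧ p' ∩ q' = r := by
  obtain ⟨⟨a0, ha0⟩, hpu, hpi⟩ := hp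
  obtain ⟨⟨b0, hb0⟩, hqu, hqi⟩ := hq
  obtain ⟨⟨c0, hc0⟩, hru, hri⟩ := hr
  refine ⟨{x | ∃ a ∈ p, ∃ c ∈ r, a ⊓ c ≤ x}, {x | ∃ b ∈ q, ∃ c ∈ r, b ⊓ c ≤ x},
    ⟨⟨a0, a0, ha0, c0, hc0, inf_le_left⟩, ?_, ?_⟩,
    ⟨⟨b0, b0, hb0, c0, hc0, inf_le_left⟩, ?_, ?_⟩, ?_, ?_, ?_⟩
  · rintro x ⟨a, ha, c, hc, hle⟩ y hxy
    exact ⟨a, ha, c, hc, hle.trans hxy⟩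
  · rintro x ⟨a, ha, c, hc, hle⟩ y ⟨a', ha', c', hc', hle'⟩
    refine ⟨a ⊓ a', hpi _ ha _ ha', c ⊓ c', hri _ hc _ hc', ?_⟩
    calc (a ⊓ a') ⊓ (c ⊓ c') ≤ (a ⊓ c) ⊓ (a' ⊓ c') := by
          refine le_inf (inf_le_inf inf_le_left inf_le_left)
            (inf_le_inf inf_le_right inf_le_right)
      _ ≤ x ⊓ y := inf_le_inf hle hle'
  · rintro x ⟨b, hb, c, hc, hle⟩ y hxy
    exact ⟨b, hb, c, hc, hle.trans hxy⟩
  · rintro x ⟨b, hb, c, hc, hle⟩ y ⟨b', hb', c', hc', hle'⟩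
    refine ⟨b ⊓ b', hqi _ hb _ hb', c ⊓ c', hri _ hc _ hc', ?_⟩
    calc (b ⊓ b') ⊓ (c ⊓ c') ≤ (b ⊓ c) ⊓ (b' ⊓ c') := by
          refine le_inf (inf_le_inf inf_le_left inf_le_left)
            (inf_le_inf inf_le_right inf_le_right)
      _ ≤ x ⊓ y := inf_le_inf hle hle'
  · exact fun a ha => ⟨a, ha, c0, hc0, inf_le_left⟩
  · exact fun b hb => ⟨b, hb, c0, hc0, inf_le_left⟩
  · ext x
    constructor
    · rintro ⟨⟨a, ha, c, hc, hle⟩, ⟨b, hb, d, hd, hle'⟩⟩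
      obtain ⟨a₁, c₁, ha₁, hc₁, hx⟩ := hdist a c x hle
      have hbd : b ⊓ d ≤ a₁ := hle'.trans (hx.le.trans inf_le_left)
      obtain ⟨b₁, d₁, hb₁, hd₁, ha₁eq⟩ := hdist b d a₁ hbd
      have hb₁p : b₁ ∈ p := hpu a ha b₁ (ha₁.trans (ha₁eq.le.trans inf_le_left))
      have hb₁q : b₁ ∈ q := hqu b hb b₁ hb₁
      have hb₁r : b₁ ∈ r := hsub ⟨hb₁p, hb₁q⟩
      have hd₁r : d₁ ∈ r := hru d hd d₁ hd₁
      have ha₁r : a₁ ∈ r := ha₁eq ▸ hri _ hb₁r _ hd₁r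
      have hc₁r : c₁ ∈ r := hru c hc c₁ hc₁
      exact hx ▸ hri _ ha₁r _ hc₁r
    · intro hx
      exact ⟨⟨a0, ha0, x, hx, inf_le_right⟩, ⟨b0, hb0, x, hx, inf_le_right⟩⟩
end

section
/- If A is a distributive meet-semilattice and a, b are filters of A, then the set C = { x ∈ A | for all y, if x ≤ y and y ∈ a then y ∈ b } is a filter of A; moreover C is the relative pseudocomplement of a with respect to b among filters: for every filter c, c ∩ a ⊆ b if and only if c ⊆ C. Hence the filter semilattice of a distributive meet-semilattice is an implicative semilattice. -/
theorem filters_implicative {α : Type*} [SemilatticeInf α] [OrderTop α]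
    (hdist : IsDistribSL α) (a b : Set α) (ha : IsSLFilter a) (hb : IsSLFilter b) :
    IsSLFilter {x : α | ∀ y, x ≤ y → y ∈ a → y ∈ b} ∧
    ∀ c : Set α, IsSLFilter c →
      (c ∩ a ⊆ b ↔ c ⊆ {x : α | ∀ y, x ≤ y → y ∈ a → y ∈ b}) := by
  obtain ⟨⟨b0, hb0⟩, hbup, hbinf⟩ := hb
  obtain ⟨_, haup, _⟩ := ha
  have htopb : (⊤ : α) ∈ b := hbup b0 hb0 ⊤ le_top
  constructor
  · refine ⟨⟨⊤, ?_⟩, ?_, ?_⟩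
    · intro y hy _
      have : y = ⊤ := le_antisymm le_top hy
      simpa [this] using htopb
    · intro x hx z hxz y hzy hya
      exact hx y (le_trans hxz hzy) hya
    · intro x hx x' hx' y hy hya
      obtain ⟨u, v, hxu, hx'v, rfl⟩ := hdist x x' y hy
      have hua : u ∈ a := haup _ hya u inf_le_left
      have hva : v ∈ a := haup _ hya v inf_le_right
      exact hbinf u (hx u hxu hua) v (hx' v hx'v hva)
  · intro c ⟨_, hcup, _⟩
    constructor
    · intro h x hx y hxy hya
      exact h ⟨hcup x hx y hxy, hya⟩
    · intro h x ⟨hxc, hxa⟩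
      exact h hxc x le_rfl hxa
end

section
/- For a □-frame (X, ≤, R), the map γ_R sending x to R[x] = { y | xRy } is well-defined into the set of filters of (X, ≤) and preserves top and binary meets, where the filter collection is ordered by reverse inclusion with meet a ⩕ b = { u ∧ v | u ∈ a, v ∈ b } and top {⊤}. Conversely, given such a meet-preserving map γ from X to filters, the relation xRy iff y ∈ γ(x) satisfies the □-frame conditions (B1)–(B4). -/
/-- The conditions (B1)–(B4) on the relation `R` of a `□`-frame. -/
structure IsBoxFrameRel {α : Type*} [SemilatticeInf α] [OrderTop α]
    (R : α → α → Prop) : Prop where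
  b1 : (∀ x : α, R ⊤ x ↔ x = ⊤) ∧ ∀ x : α, R x ⊤
  b2 : ∀ x y z : α, R x y → y ≤ z → R x z
  b3 : ∀ x y x' y' : α, R x y → R x' y' → R (x ⊓ x') (y ⊓ y')
  b4 : ∀ x x' z : α, R (x ⊓ x') z → ∃ y y' : α, R x y ∧ R x' y' ∧ y ⊓ y' = z

/-- The meet of two filters in the semilattice `G(X)` of filters ordered by
reverse inclusion. -/
def filterMeet {α : Type*} [SemilatticeInf α] (a b : Set α) : Set α :=
  {z : α | ∃ u ∈ a, ∃ v ∈ b, z = u ⊓ v}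

theorem boxFrame_dialgebra_correspondence {α : Type*} [SemilatticeInf α]
    [OrderTop α] :
    (∀ R : α → α → Prop, IsBoxFrameRel R →
      (∀ x : α, IsSLFilter {y : α | R x y}) ∧
      {y : α | R (⊤ : α) y} = {(⊤ : α)} ∧
      ∀ x x' : α, {y : α | R (x ⊓ x') y}
        = filterMeet {y : α | R x y} {y : α | R x' y}) ∧
    (∀ γ : α → Set α, (∀ x : α, IsSLFilter (γ x)) → γ ⊤ = {(⊤ : α)} →
      (∀ x x' : α, γ (x ⊓ x') = filterMeet (γ x) (γ x')) →
      IsBoxFrameRel (fun x y => y ∈ γ x)) := by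
  constructor
  · intro R hR
    refine ⟨?_, ?_, ?_⟩
    · intro x
      refine ⟨⟨⊤, hR.b1.2 x⟩, fun y hy z hz => hR.b2 x y z hy hz, ?_⟩
      intro y hy z hz
      have := hR.b3 x y x z hy hz
      simpa using this
    · ext y
      simp [hR.b1.1 y]
    · intro x x'
      ext z
      constructor
      · intro hz
        obtain ⟨y, y', h1, h2, h3⟩ := hR.b4 x x' z hz
        exact ⟨y, h1, y', h2, h3.symm⟩
      · rintro ⟨u, hu, v, hv, rfl⟩
        exact hR.b3 x u x' v hu hv
  · intro γ hfil htop hmeet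
    refine ⟨⟨?_, ?_⟩, ?_, ?_, ?_⟩
    · intro x; simp [htop]
    · intro x
      obtain ⟨⟨w, hw⟩, hup, _⟩ := hfil x
      exact hup w hw ⊤ le_top
    · intro x y z hy hyz
      exact (hfil x).2.1 y hy z hyz
    · intro x y x' y' hy hy'
      rw [hmeet]
      exact ⟨y, hy, y', hy', rfl⟩
    · intro x x' z hz
      rw [hmeet] at hz
      obtain ⟨u, hu, v, hv, rfl⟩ := hz
      exact ⟨u, v, hu, hv, rfl⟩
end
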